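/- Let Ω ⊂ ℝⁿ be a bounded domain with smooth boundary and let u ∈ C⁰(closure(Ω)) ∩ C²(Ω) with 0 ≤ u < 1 in Ω be a stable solution of −Δu = f(u) in Ω with u = 0 on ∂Ω, where f ∈ C²([0,1)) satisfies f ≥ 0, f′ ≥ 0, f″ ≥ 0, and lim_{t→1⁻} f(t) = +∞. Then ∫_Ω f′(u(x)) f(u(x)) dx ≤ C for a constant C depending only on f and the Lebesgue measure |Ω| of Ω. -/

import Mathlib

open MeasureTheory Set Filter Topology Bornology Metric
open Function
open scoped Convolution

set_option maxHeartbeats 1000000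

/-- The Laplacian of `u : ℝⁿ → ℝ`, as the sum of second partial derivatives. -/
noncomputable def lap {n : ℕ} (u : EuclideanSpace ℝ (Fin n) → ℝ)
    (x : EuclideanSpace ℝ (Fin n)) : ℝ :=
  ∑ i, fderiv ℝ (fun y => fderiv ℝ u y (EuclideanSpace.single i 1)) x (EuclideanSpace.single i 1)

/-- `f` is of class `C²([0,1))`, with first and second derivatives `f'`, `f''`. -/
def C2On01 (f f' f'' : ℝ → ℝ) : Prop :=
  (∀ t ∈ Ico (0:ℝ) 1, HasDerivWithinAt f (f' t) (Ico (0:ℝ) 1) t) ∧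
  (∀ t ∈ Ico (0:ℝ) 1, HasDerivWithinAt f' (f'' t) (Ico (0:ℝ) 1) t) ∧
  ContinuousOn f'' (Ico (0:ℝ) 1)

/-- Stability of a solution `u` of `-Δu = f(u)` in `Ω`: nonnegativity of the second variation of
the energy on all smooth test functions compactly supported in `Ω`. Here `f'` is the derivative
of the nonlinearity. -/
def StableSol {n : ℕ} (f' : ℝ → ℝ) (u : EuclideanSpace ℝ (Fin n) → ℝ)
    (Ω : Set (EuclideanSpace ℝ (Fin n))) : Prop :=
  ∀ ξ : EuclideanSpace ℝ (Fin n) → ℝ, ContDiff ℝ (⊤:ℕ∞) ξ → HasCompactSupport ξ →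
    tsupport ξ ⊆ Ω →
    0 ≤ ∫ x in Ω, (‖gradient ξ x‖ ^ 2 - f' (u x) * ξ x ^ 2)

/-- A bounded domain (open, connected) in `ℝⁿ` with smooth boundary, described by a smooth
defining function `ρ` whose gradient does not vanish on the boundary. -/
def SmoothBoundedDomain {n : ℕ} (Ω : Set (EuclideanSpace ℝ (Fin n))) : Prop :=
  IsOpen Ω ∧ IsBounded Ω ∧ IsConnected Ω ∧
  ∃ ρ : EuclideanSpace ℝ (Fin n) → ℝ, ContDiff ℝ (⊤:ℕ∞) ρ ∧ Ω = {x | ρ x < 0} ∧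
    ∀ x ∈ frontier Ω, fderiv ℝ ρ x ≠ 0

abbrev Eu (n : ℕ) := EuclideanSpace ℝ (Fin n)

lemma precompR_lsmul {n : ℕ} :
    (ContinuousLinearMap.lsmul ℝ ℝ : ℝ →L[ℝ] ℝ →L[ℝ] ℝ).precompR (Eu n) =
      (ContinuousLinearMap.lsmul ℝ ℝ : ℝ →L[ℝ] (Eu n →L[ℝ] ℝ) →L[ℝ] (Eu n →L[ℝ] ℝ)) := by
  refine ContinuousLinearMap.ext fun r => ContinuousLinearMap.ext fun g =>
    ContinuousLinearMap.ext fun v => ?_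
  simp [ContinuousLinearMap.precompR]


lemma integral_fderiv_apply_eq_zero {n : ℕ} {h : EuclideanSpace ℝ (Fin n) → ℝ}
    {v : EuclideanSpace ℝ (Fin n)}
    (hdiff : Differentiable ℝ h) (hcont : Continuous fun x => fderiv ℝ h x v)
    (hsupp : HasCompactSupport h) (hsupp' : HasCompactSupport fun x => fderiv ℝ h x v) :
    ∫ x, fderiv ℝ h x v = 0 := by
  have h1 : Integrable (fun x => fderiv ℝ h x v) volume :=
    hcont.integrable_of_hasCompactSupport hsupp'
  have h2 : Integrable h volume := hdiff.continuous.integrable_of_hasCompactSupport hsupp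
  have key := integral_mul_fderiv_eq_neg_fderiv_mul_of_integrable
    (μ := volume) (f := fun _ : EuclideanSpace ℝ (Fin n) => (1:ℝ)) (g := h) (v := v)
    (by simpa using h2.const_mul 0)
    (by simpa using h1) (by simpa using h2) (fun x _ => differentiableAt_const (1:ℝ)) (fun x _ => hdiff x)
  simpa using key

lemma stability_extension {n : ℕ} {Ω : Set (Eu n)} (hΩ : IsOpen Ω)
    {c : Eu n → ℝ}
    (hcm : AEStronglyMeasurable c (volume.restrict Ω)) {M : ℝ}
    (hM : ∀ x ∈ Ω, |c x| ≤ M)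
    (hst : ∀ ξ : Eu n → ℝ, ContDiff ℝ (⊤:ℕ∞) ξ → HasCompactSupport ξ →
      tsupport ξ ⊆ Ω → 0 ≤ ∫ x in Ω, (‖gradient ξ x‖ ^ 2 - c x * ξ x ^ 2))
    {w : Eu n → ℝ} (hw : ContDiff ℝ 1 w) (hwc : HasCompactSupport w)
    (hwΩ : tsupport w ⊆ Ω) :
    0 ≤ ∫ x in Ω, (‖fderiv ℝ w x‖ ^ 2 - c x * w x ^ 2) := by
  classical
  obtain ⟨δ, hδpos, hδ⟩ := hwc.exists_cthickening_subset_open hΩ hwΩ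
  set C : Set (Eu n) := cthickening δ (tsupport w) with hCdef
  have hCc : IsCompact C := hwc.cthickening
  have hwcont : Continuous w := hw.continuous
  have hwint : Integrable w volume := hwcont.integrable_of_hasCompactSupport hwc
  have hwloc : LocallyIntegrable w volume := hwint.locallyIntegrable
  have hw' : Continuous (fderiv ℝ w) := (contDiff_one_iff_fderiv.mp hw).2
  have hwc' : HasCompactSupport (fderiv ℝ w) := hwc.fderiv (𝕜 := ℝ)
  have hr1 : ∀ k : ℕ, (0:ℝ) < δ/((k:ℝ)+2) := fun k => by positivity
  have hr2 : ∀ k : ℕ, δ/((k:ℝ)+2) < δ/((k:ℝ)+1) := fun k => by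
    apply div_lt_div_of_pos_left hδpos (by positivity)
    norm_num
  set φb : ℕ → ContDiffBump (0 : Eu n) := fun k =>
    ⟨δ/((k:ℝ)+2), δ/((k:ℝ)+1), hr1 k, hr2 k⟩ with hφbdef
  have hrOuteq : (fun k : ℕ => (φb k).rOut) = fun k : ℕ => δ/((k:ℝ)+1) := rfl
  have hrOut : Tendsto (fun k : ℕ => (φb k).rOut) atTop (𝓝 0) := by
    rw [hrOuteq]
    exact Tendsto.div_atTop tendsto_const_nhds
      (Filter.tendsto_atTop_add_const_right atTop 1 tendsto_natCast_atTop_atTop)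
  have hrOutle : ∀ k : ℕ, (φb k).rOut ≤ δ := fun k => by
    have : (φb k).rOut = δ/((k:ℝ)+1) := rfl
    rw [this]
    exact div_le_self hδpos.le (by norm_num)
  set ξ : ℕ → Eu n → ℝ := fun k =>
    convolution ((φb k).normed volume) w (ContinuousLinearMap.lsmul ℝ ℝ) volume with hξdef
  set D : ℕ → Eu n → (Eu n →L[ℝ] ℝ) := fun k =>
    convolution ((φb k).normed volume) (fderiv ℝ w)
      (ContinuousLinearMap.lsmul ℝ ℝ) volume with hDdef
  have hfd : ∀ k x, HasFDerivAt (ξ k) (D k x) x := by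
    intro k x
    have := HasCompactSupport.hasFDerivAt_convolution_right
      (ContinuousLinearMap.lsmul ℝ ℝ) hwc (((φb k).integrable_normed (μ := volume)).locallyIntegrable) hw x
    rwa [precompR_lsmul] at this
  have hsmooth : ∀ k, ContDiff ℝ (⊤:ℕ∞) (ξ k) := fun k =>
    HasCompactSupport.contDiff_convolution_left _ (φb k).hasCompactSupport_normed
      ((φb k).contDiff_normed) hwloc
  -- supports: any convolution of the bumps with a function supported in `tsupport w`
  -- vanishes outside `C`.
  have hthick : ∀ (k : ℕ) (E' : Type) (_ : NormedAddCommGroup E') (_ : NormedSpace ℝ E'), True := fun _ _ _ _ => trivial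
  have hzξ : ∀ k x, x ∉ C → ξ k x = 0 := by
    intro k x hx
    apply Function.notMem_support.mp
    intro hmem
    apply hx
    obtain ⟨a, ha, b, hb, rfl⟩ := support_convolution_subset (ContinuousLinearMap.lsmul ℝ ℝ) hmem
    rw [(φb k).support_normed_eq] at ha
    have : a + b ∈ thickening ((φb k).rOut) (tsupport w) := by
      rw [mem_thickening_iff]
      exact ⟨b, subset_tsupport w hb, by simpa [dist_eq_norm] using mem_ball_zero_iff.mp ha⟩
    exact (thickening_subset_cthickening_of_le (hrOutle k) _) this
  have hzD : ∀ k x, x ∉ C → D k x = 0 := by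
    intro k x hx
    apply Function.notMem_support.mp
    intro hmem
    apply hx
    obtain ⟨a, ha, b, hb, rfl⟩ := support_convolution_subset (ContinuousLinearMap.lsmul ℝ ℝ) hmem
    rw [(φb k).support_normed_eq] at ha
    have : a + b ∈ thickening ((φb k).rOut) (tsupport w) := by
      rw [mem_thickening_iff]
      exact ⟨b, support_fderiv_subset ℝ hb,
        by simpa [dist_eq_norm] using mem_ball_zero_iff.mp ha⟩
    exact (thickening_subset_cthickening_of_le (hrOutle k) _) this
  have hcsξ : ∀ k, HasCompactSupport (ξ k) := fun k =>
    HasCompactSupport.intro hCc (hzξ k)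
  have htsΩ : ∀ k, tsupport (ξ k) ⊆ Ω := by
    intro k
    refine subset_trans ?_ hδ
    apply closure_minimal ?_ hCc.isClosed
    intro x hx
    by_contra hxc
    exact hx (hzξ k x hxc)
  -- bounds
  obtain ⟨Mw, hMw⟩ := hwcont.bounded_above_of_compact_support hwc
  obtain ⟨MD, hMD⟩ := hw'.bounded_above_of_compact_support hwc'
  have hMw0 : 0 ≤ Mw := le_trans (norm_nonneg _) (hMw 0)
  have hMD0 : 0 ≤ MD := le_trans (norm_nonneg _) (hMD 0)
  have hbd : ∀ k x, ‖ξ k x‖ ≤ Mw := by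
    intro k x
    have := dist_convolution_le (f := (φb k).normed volume) (g := w) (μ := volume)
      (x₀ := x) (z₀ := (0:ℝ)) hMw0 (subset_of_eq (φb k).support_normed_eq)
      (φb k).nonneg_normed ((φb k).integral_normed)
      hwcont.aestronglyMeasurable (fun y _ => by simpa [dist_zero_right] using hMw y)
    simpa [hξdef, dist_zero_right] using this
  have hbdD : ∀ k x, ‖D k x‖ ≤ MD := by
    intro k x
    have := dist_convolution_le (f := (φb k).normed volume) (g := fderiv ℝ w) (μ := volume)
      (x₀ := x) (z₀ := (0 : Eu n →L[ℝ] ℝ)) hMD0 (subset_of_eq (φb k).support_normed_eq)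
      (φb k).nonneg_normed ((φb k).integral_normed)
      hw'.aestronglyMeasurable (fun y _ => by simpa [dist_zero_right] using hMD y)
    simpa [hDdef, dist_zero_right] using this
  -- pointwise convergence
  have hξlim : ∀ x, Tendsto (fun k => ξ k x) atTop (𝓝 (w x)) := fun x =>
    ContDiffBump.convolution_tendsto_right_of_continuous hrOut hwcont x
  have hDlim : ∀ x, Tendsto (fun k => D k x) atTop (𝓝 (fderiv ℝ w x)) := fun x =>
    ContDiffBump.convolution_tendsto_right_of_continuous hrOut hw' x
  have hξcont : ∀ k, Continuous (ξ k) := fun k => (hsmooth k).continuous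
  have hDcont : ∀ k, Continuous (D k) := fun k =>
    hwc'.continuous_convolution_right _ (((φb k).integrable_normed (μ := volume)).locallyIntegrable) hw'
  have hgradnorm : ∀ k x, ‖gradient (ξ k) x‖ = ‖D k x‖ := by
    intro k x
    rw [gradient, (hfd k x).fderiv]
    exact LinearIsometryEquiv.norm_map _ _
  have hstk : ∀ k, 0 ≤ ∫ x in Ω, (‖D k x‖ ^ 2 - c x * ξ k x ^ 2) := by
    intro k
    have h0 := hst (ξ k) (hsmooth k) (hcsξ k) (htsΩ k)
    have heq : (fun x => ‖gradient (ξ k) x‖ ^ 2 - c x * ξ k x ^ 2)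
        = fun x => ‖D k x‖ ^ 2 - c x * ξ k x ^ 2 := by
      funext x; rw [hgradnorm k x]
    rwa [heq] at h0
  set M' : ℝ := max M 0 with hM'def
  set bnd : Eu n → ℝ := C.indicator (fun _ => MD^2 + M' * Mw^2) with hbnddef
  have hbndint : Integrable bnd (volume.restrict Ω) := by
    rw [hbnddef, integrable_indicator_iff hCc.measurableSet]
    refine (integrableOn_const_iff).mpr (Or.inr ?_)
    calc (volume.restrict Ω) C = volume (C ∩ Ω) := Measure.restrict_apply hCc.measurableSet
    _ ≤ volume C := measure_mono inter_subset_left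
    _ < ⊤ := hCc.measure_lt_top
  have hFmeas : ∀ k, AEStronglyMeasurable (fun x => ‖D k x‖ ^ 2 - c x * ξ k x ^ 2)
      (volume.restrict Ω) := by
    intro k
    apply AEStronglyMeasurable.sub
    · exact (((hDcont k).norm.pow 2)).aestronglyMeasurable
    · exact hcm.mul (((hξcont k).pow 2)).aestronglyMeasurable
  have hFbound : ∀ k, ∀ᵐ x ∂(volume.restrict Ω),
      ‖‖D k x‖ ^ 2 - c x * ξ k x ^ 2‖ ≤ bnd x := by
    intro k
    rw [ae_restrict_iff' hΩ.measurableSet]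
    apply ae_of_all
    intro x hx
    by_cases hxC : x ∈ C
    · rw [hbnddef, indicator_of_mem hxC]
      have h1 : ‖D k x‖^2 ≤ MD^2 := pow_le_pow_left₀ (norm_nonneg _) (hbdD k x) 2
      have h2 : |c x * ξ k x ^ 2| ≤ M' * Mw^2 := by
        rw [abs_mul]
        apply mul_le_mul ((hM x hx).trans (le_max_left _ _)) ?_ (abs_nonneg _)
          (le_max_right M 0)
        rw [abs_pow]
        apply pow_le_pow_left₀ (abs_nonneg _) ?_
        rw [← Real.norm_eq_abs]; exact hbd k x
      calc ‖‖D k x‖ ^ 2 - c x * ξ k x ^ 2‖ ≤ ‖‖D k x‖^2‖ + ‖c x * ξ k x ^2‖ := norm_sub_le _ _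
      _ ≤ MD^2 + M' * Mw^2 := by
          apply add_le_add
          · rwa [Real.norm_eq_abs, abs_of_nonneg (by positivity)]
          · rwa [Real.norm_eq_abs]
    · rw [hzξ k x hxC, hzD k x hxC, hbnddef, indicator_of_notMem hxC]
      simp
  have hFlim : ∀ᵐ x ∂(volume.restrict Ω),
      Tendsto (fun k => ‖D k x‖ ^ 2 - c x * ξ k x ^ 2) atTop
        (𝓝 (‖fderiv ℝ w x‖ ^ 2 - c x * w x ^ 2)) := by
    apply ae_of_all
    intro x
    exact (((hDlim x).norm.pow 2)).sub (((hξlim x).pow 2).const_mul (c x))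
  have hlim := MeasureTheory.tendsto_integral_of_dominated_convergence bnd hFmeas hbndint
    hFbound hFlim
  exact ge_of_tendsto' hlim hstk

section glue

variable {n : ℕ} {Ω K : Set (Eu n)} {β : Type*} [NormedAddCommGroup β]

lemma glue_zero (hKΩ : K ⊆ Ω) {F : Eu n → β} (h0 : ∀ x ∈ Ω, x ∉ K → F x = 0) :
    ∀ x, x ∉ K → Ω.indicator F x = 0 := by
  intro x hx
  by_cases hxΩ : x ∈ Ω
  · rw [indicator_of_mem hxΩ]; exact h0 x hxΩ hx
  · exact indicator_of_notMem hxΩ F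

lemma glue_continuous (hΩ : IsOpen Ω) (hK : IsClosed K) (hKΩ : K ⊆ Ω)
    {F : Eu n → β} (hF : ContinuousOn F Ω) (h0 : ∀ x ∈ Ω, x ∉ K → F x = 0) :
    Continuous (Ω.indicator F) := by
  rw [continuous_iff_continuousAt]
  intro x
  by_cases hxΩ : x ∈ Ω
  · refine (hF.continuousAt (hΩ.mem_nhds hxΩ)).congr ?_
    exact Filter.eventuallyEq_of_mem (hΩ.mem_nhds hxΩ) fun y hy => (indicator_of_mem hy F).symm
  · have hxK : x ∉ K := fun h => hxΩ (hKΩ h)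
    refine (continuousAt_const (y := (0:β))).congr ?_
    exact Filter.eventuallyEq_of_mem (hK.isOpen_compl.mem_nhds hxK)
      fun y hy => (glue_zero hKΩ h0 y hy).symm

end glue

section glueC1

variable {n : ℕ} {Ω K : Set (Eu n)}

lemma glue_eventually_eq (hΩ : IsOpen Ω) {F : Eu n → ℝ} {x : Eu n} (hx : x ∈ Ω) :
    Ω.indicator F =ᶠ[𝓝 x] F :=
  Filter.eventuallyEq_of_mem (hΩ.mem_nhds hx) fun y hy => indicator_of_mem hy F

lemma glue_eventually_zero (hK : IsClosed K) (hKΩ : K ⊆ Ω) {F : Eu n → ℝ}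
    (h0 : ∀ x ∈ Ω, x ∉ K → F x = 0) {x : Eu n} (hx : x ∉ K) :
    Ω.indicator F =ᶠ[𝓝 x] (fun _ => (0:ℝ)) :=
  Filter.eventuallyEq_of_mem (hK.isOpen_compl.mem_nhds hx) fun y hy => glue_zero hKΩ h0 y hy

lemma glue_C1 (hΩ : IsOpen Ω) (hK : IsClosed K) (hKΩ : K ⊆ Ω)
    {F : Eu n → ℝ} {F' : Eu n → (Eu n →L[ℝ] ℝ)}
    (hF : ∀ x ∈ Ω, HasFDerivAt F (F' x) x) (hF'c : ContinuousOn F' Ω)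
    (h0 : ∀ x ∈ Ω, x ∉ K → F x = 0) (h0' : ∀ x ∈ Ω, x ∉ K → F' x = 0) :
    ContDiff ℝ 1 (Ω.indicator F) ∧ (∀ x ∈ Ω, fderiv ℝ (Ω.indicator F) x = F' x) ∧
      (∀ x, x ∉ K → fderiv ℝ (Ω.indicator F) x = 0) := by
  have hder : ∀ x ∈ Ω, HasFDerivAt (Ω.indicator F) (F' x) x := fun x hx =>
    (hF x hx).congr_of_eventuallyEq (glue_eventually_eq hΩ hx)
  have hder0 : ∀ x, x ∉ K → HasFDerivAt (Ω.indicator F) (0 : Eu n →L[ℝ] ℝ) x := fun x hx =>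
    (hasFDerivAt_const (0:ℝ) x).congr_of_eventuallyEq (glue_eventually_zero hK hKΩ h0 hx)
  have hdiff : Differentiable ℝ (Ω.indicator F) := by
    intro x
    by_cases hx : x ∈ Ω
    · exact (hder x hx).differentiableAt
    · exact (hder0 x (fun h => hx (hKΩ h))).differentiableAt
  have hfeq : ∀ x ∈ Ω, fderiv ℝ (Ω.indicator F) x = F' x := fun x hx => (hder x hx).fderiv
  have hfeq0 : ∀ x, x ∉ K → fderiv ℝ (Ω.indicator F) x = 0 := fun x hx => (hder0 x hx).fderiv
  refine ⟨contDiff_one_iff_fderiv.mpr ⟨hdiff, ?_⟩, hfeq, hfeq0⟩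
  rw [continuous_iff_continuousAt]
  intro x
  by_cases hx : x ∈ Ω
  · have : ContinuousOn (fderiv ℝ (Ω.indicator F)) Ω := hF'c.congr hfeq
    exact this.continuousAt (hΩ.mem_nhds hx)
  · have hxK : x ∉ K := fun h => hx (hKΩ h)
    refine (continuousAt_const (y := (0 : Eu n →L[ℝ] ℝ))).congr ?_
    exact Filter.eventuallyEq_of_mem (hK.isOpen_compl.mem_nhds hxK)
      fun y hy => (hfeq0 y hy).symm

end glueC1

lemma nedev_identity {n : ℕ} {Ω : Set (Eu n)} (hΩ : IsOpen Ω)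
    {u : Eu n → ℝ} (hu : ContDiffOn ℝ 2 u Ω) {K : Set (Eu n)} (hK : IsCompact K) (hKΩ : K ⊆ Ω)
    {φφ ζ' : ℝ → ℝ} (hζ'c : Continuous ζ') (hφφ : ∀ t, HasDerivAt φφ ((ζ' t)^2) t)
    (h0 : ∀ x ∈ Ω, x ∉ K → φφ (u x) = 0) (h0' : ∀ x ∈ Ω, x ∉ K → ζ' (u x) = 0) :
    (∫ x in Ω, (ζ' (u x))^2 * (∑ i, (fderiv ℝ u x (EuclideanSpace.single i 1))^2)) =
      ∫ x in Ω, φφ (u x) * (-lap u x)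
    ∧ IntegrableOn (fun x => (ζ' (u x))^2 *
        (∑ i, (fderiv ℝ u x (EuclideanSpace.single i 1))^2)) Ω volume
    ∧ IntegrableOn (fun x => φφ (u x) * (-lap u x)) Ω volume := by
  classical
  have hφφc : Continuous φφ := by
    rw [continuous_iff_continuousAt]
    exact fun t => (hφφ t).differentiableAt.continuousAt
  have hucont : ContinuousOn u Ω := hu.continuousOn
  -- first derivative of u as a C¹ map on Ω
  have hfu : ContDiffOn ℝ 1 (fderiv ℝ u) Ω := hu.fderiv_of_isOpen hΩ (by norm_num)
  have hfucont : ContinuousOn (fderiv ℝ u) Ω := hfu.continuousOn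
  have hffucont : ContinuousOn (fderiv ℝ (fderiv ℝ u)) Ω :=
    hfu.continuousOn_fderiv_of_isOpen hΩ le_rfl
  have hud : ∀ x ∈ Ω, DifferentiableAt ℝ u x := fun x hx =>
    (hu.contDiffAt (hΩ.mem_nhds hx)).differentiableAt (by norm_num)
  have hfud : ∀ x ∈ Ω, DifferentiableAt ℝ (fderiv ℝ u) x := fun x hx =>
    (hfu.differentiableOn one_ne_zero).differentiableAt (hΩ.mem_nhds hx)
  -- componentwise integrals vanish
  have hcomp : ∀ i : Fin n,
      (∫ x in Ω, ((ζ' (u x))^2 * (fderiv ℝ u x (EuclideanSpace.single i 1))^2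
        + φφ (u x) * fderiv ℝ (fun y => fderiv ℝ u y (EuclideanSpace.single i 1)) x
            (EuclideanSpace.single i 1)) ) = 0
      ∧ IntegrableOn (fun x => ((ζ' (u x))^2 * (fderiv ℝ u x (EuclideanSpace.single i 1))^2
        + φφ (u x) * fderiv ℝ (fun y => fderiv ℝ u y (EuclideanSpace.single i 1)) x
            (EuclideanSpace.single i 1))) Ω volume := by
    intro i
    set e : Eu n := EuclideanSpace.single i 1 with hedef
    set L : (Eu n →L[ℝ] ℝ) →L[ℝ] ℝ := ContinuousLinearMap.apply ℝ ℝ e with hLdef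
    set B : Eu n → ℝ := fun y => fderiv ℝ u y e with hBdef
    have hBL : B = fun y => L (fderiv ℝ u y) := rfl
    have hBd : ∀ x ∈ Ω, DifferentiableAt ℝ B x := fun x hx =>
      ((hfud x hx).clm_apply (differentiableAt_const e))
    have hBfd : ∀ x ∈ Ω, HasFDerivAt B (L.comp (fderiv ℝ (fderiv ℝ u) x)) x := by
      intro x hx
      rw [hBL]
      exact L.hasFDerivAt.comp x (hfud x hx).hasFDerivAt
    have hBc : ContinuousOn B Ω := hfucont.clm_apply continuousOn_const
    -- the local function and its derivative
    set F : Eu n → ℝ := fun x => φφ (u x) * B x with hFdef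
    set F' : Eu n → (Eu n →L[ℝ] ℝ) := fun x =>
      φφ (u x) • (L.comp (fderiv ℝ (fderiv ℝ u) x)) + B x • ((ζ' (u x))^2 • fderiv ℝ u x)
      with hF'def
    have hFd : ∀ x ∈ Ω, HasFDerivAt F (F' x) x := by
      intro x hx
      have h1 : HasFDerivAt (fun y => φφ (u y)) ((ζ' (u x))^2 • fderiv ℝ u x) x :=
        (hφφ (u x)).comp_hasFDerivAt x (hud x hx).hasFDerivAt
      have h2 := h1.mul (hBfd x hx)
      simpa [hFdef, hF'def, Pi.mul_def] using h2
    have hF'c : ContinuousOn F' Ω := by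
      apply ContinuousOn.add
      · exact ((hφφc.comp_continuousOn hucont)).smul
          ((ContinuousLinearMap.compL ℝ _ _ _ L).continuous.comp_continuousOn hffucont)
      · exact hBc.smul (((hζ'c.comp_continuousOn hucont).pow 2).smul hfucont)
    have h0F : ∀ x ∈ Ω, x ∉ K → F x = 0 := by
      intro x hx hxK
      rw [hFdef]
      simp [h0 x hx hxK]
    have h0F' : ∀ x ∈ Ω, x ∉ K → F' x = 0 := by
      intro x hx hxK
      rw [hF'def]
      simp [h0 x hx hxK, h0' x hx hxK]
    obtain ⟨hC1, hfeq, hfeq0⟩ := glue_C1 hΩ hK.isClosed hKΩ hFd hF'c h0F h0F'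
    set h : Eu n → ℝ := Ω.indicator F with hhdef
    have hzero : ∀ x, x ∉ K → h x = 0 := glue_zero hKΩ h0F
    have hsupp : HasCompactSupport h := HasCompactSupport.intro hK hzero
    have hdiff : Differentiable ℝ h := (contDiff_one_iff_fderiv.mp hC1).1
    have hcont' : Continuous (fderiv ℝ h) := (contDiff_one_iff_fderiv.mp hC1).2
    have hsupp' : HasCompactSupport (fun x => fderiv ℝ h x e) :=
      HasCompactSupport.intro hK (fun x hx => by rw [hfeq0 x hx]; rfl)
    have hint0 : ∫ x, fderiv ℝ h x e = 0 :=
      integral_fderiv_apply_eq_zero hdiff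
        ((ContinuousLinearMap.apply ℝ ℝ e).continuous.comp hcont') hsupp hsupp'
    -- the integrand of interest agrees with `fderiv h · e` on `Ω` and vanishes off `Ω`
    have hagree : ∀ x ∈ Ω, fderiv ℝ h x e
        = (ζ' (u x))^2 * (fderiv ℝ u x e)^2 + φφ (u x) * fderiv ℝ B x e := by
      intro x hx
      rw [hfeq x hx, hF'def]
      have hBeq : fderiv ℝ B x = L.comp (fderiv ℝ (fderiv ℝ u) x) := (hBfd x hx).fderiv
      rw [hBeq]
      simp [hBdef, ContinuousLinearMap.add_apply, ContinuousLinearMap.smul_apply,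
        smul_eq_mul]
      ring
    have hoff : ∀ x, x ∉ Ω → fderiv ℝ h x e = 0 := fun x hx => by
      rw [hfeq0 x (fun hk => hx (hKΩ hk))]; rfl
    have hIglobal : Integrable (fun x => fderiv ℝ h x e) volume :=
      (((ContinuousLinearMap.apply ℝ ℝ e).continuous.comp
        hcont')).integrable_of_hasCompactSupport hsupp'
    constructor
    · calc (∫ x in Ω, ((ζ' (u x))^2 * (fderiv ℝ u x e)^2 + φφ (u x) * fderiv ℝ B x e))
          = ∫ x in Ω, fderiv ℝ h x e :=
            setIntegral_congr_fun hΩ.measurableSet (fun x hx => (hagree x hx).symm)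
      _ = ∫ x, fderiv ℝ h x e := setIntegral_eq_integral_of_forall_compl_eq_zero hoff
      _ = 0 := hint0
    · apply (hIglobal.integrableOn).congr_fun (fun x hx => hagree x hx) hΩ.measurableSet
  -- sum over coordinates
  have hintsum : IntegrableOn (fun x => ∑ i : Fin n,
      ((ζ' (u x))^2 * (fderiv ℝ u x (EuclideanSpace.single i 1))^2
        + φφ (u x) * fderiv ℝ (fun y => fderiv ℝ u y (EuclideanSpace.single i 1)) x
            (EuclideanSpace.single i 1))) Ω volume := by
    apply MeasureTheory.integrable_finset_sum
    intro i _
    exact (hcomp i).2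
  have hsum0 : (∫ x in Ω, ∑ i : Fin n,
      ((ζ' (u x))^2 * (fderiv ℝ u x (EuclideanSpace.single i 1))^2
        + φφ (u x) * fderiv ℝ (fun y => fderiv ℝ u y (EuclideanSpace.single i 1)) x
            (EuclideanSpace.single i 1))) = 0 := by
    rw [MeasureTheory.integral_finset_sum _ (fun i _ => (hcomp i).2)]
    exact Finset.sum_eq_zero fun i _ => (hcomp i).1
  -- rewrite the summand
  have hsummand : ∀ x, (∑ i : Fin n,
      ((ζ' (u x))^2 * (fderiv ℝ u x (EuclideanSpace.single i 1))^2
        + φφ (u x) * fderiv ℝ (fun y => fderiv ℝ u y (EuclideanSpace.single i 1)) x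
            (EuclideanSpace.single i 1)))
      = (ζ' (u x))^2 * (∑ i, (fderiv ℝ u x (EuclideanSpace.single i 1))^2)
        + φφ (u x) * lap u x := by
    intro x
    rw [Finset.sum_add_distrib, lap, Finset.mul_sum, Finset.mul_sum]
  -- the first piece is integrable: build it by gluing
  have hs1 : IntegrableOn (fun x => (ζ' (u x))^2 *
      (∑ i, (fderiv ℝ u x (EuclideanSpace.single i 1))^2)) Ω volume := by
    set s : Eu n → ℝ := fun x => (ζ' (u x))^2 *
      (∑ i, (fderiv ℝ u x (EuclideanSpace.single i 1))^2) with hsdef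
    have hscont : ContinuousOn s Ω := by
      apply ContinuousOn.mul
      · exact (hζ'c.comp_continuousOn hucont).pow 2
      · apply continuousOn_finset_sum
        intro i _
        exact (hfucont.clm_apply continuousOn_const).pow 2
    have hs0 : ∀ x ∈ Ω, x ∉ K → s x = 0 := by
      intro x hx hxK; rw [hsdef]; simp [h0' x hx hxK]
    have : Continuous (Ω.indicator s) := glue_continuous hΩ hK.isClosed hKΩ hscont hs0
    have hind : Integrable (Ω.indicator s) volume :=
      this.integrable_of_hasCompactSupport
        (HasCompactSupport.intro hK (glue_zero hKΩ hs0))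
    exact (integrable_indicator_iff hΩ.measurableSet).mp hind
  have hs2 : IntegrableOn (fun x => φφ (u x) * lap u x) Ω volume := by
    have h' : IntegrableOn _ Ω volume := hintsum.sub hs1
    apply h'.congr_fun ?_ hΩ.measurableSet
    intro x _
    simp only [Pi.sub_apply]
    rw [hsummand x]; ring
  refine ⟨?_, hs1, ?_⟩
  · have := hsum0
    rw [setIntegral_congr_fun hΩ.measurableSet (fun x _ => hsummand x)] at this
    rw [integral_add hs1 hs2] at this
    have h3 : (∫ x in Ω, φφ (u x) * (-lap u x)) = - ∫ x in Ω, φφ (u x) * lap u x := by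
      rw [← integral_neg]
      apply setIntegral_congr_fun hΩ.measurableSet
      intro x _; ring
    rw [h3]
    linarith
  · have h'' : IntegrableOn _ Ω volume := hs2.neg
    apply h''.congr_fun ?_ hΩ.measurableSet
    intro x _
    simp only [Pi.neg_apply]
    ring

lemma norm_fderiv_sq {n : ℕ} (ℓ : Eu n →L[ℝ] ℝ) :
    ‖ℓ‖^2 = ∑ i, (ℓ (EuclideanSpace.single i 1))^2 := by
  set g : Eu n := (InnerProductSpace.toDual ℝ (Eu n)).symm ℓ with hgdef
  have hnorm : ‖ℓ‖ = ‖g‖ := by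
    rw [hgdef]
    exact (LinearIsometryEquiv.norm_map _ _).symm
  have happ : ∀ v, ℓ v = inner ℝ g v := by
    intro v
    have : InnerProductSpace.toDual ℝ (Eu n) g = ℓ := by
      rw [hgdef]; exact LinearIsometryEquiv.apply_symm_apply _ _
    rw [← this]
    rfl
  have hcoord : ∀ i, ℓ (EuclideanSpace.single i 1) = g i := by
    intro i
    rw [happ, EuclideanSpace.inner_single_right]
    simp
  calc ‖ℓ‖^2 = ‖g‖^2 := by rw [hnorm]
  _ = ∑ i, ‖g i‖^2 := by
      rw [EuclideanSpace.norm_eq, Real.sq_sqrt]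
      positivity
  _ = ∑ i, (ℓ (EuclideanSpace.single i 1))^2 := by
      apply Finset.sum_congr rfl
      intro i _
      rw [hcoord i, Real.norm_eq_abs, sq_abs]

lemma main_estimate (f f' : ℝ → ℝ) (ε s₀ t₀ : ℝ)
    (hf0 : ∀ t ∈ Ico (0:ℝ) 1, 0 ≤ f t)
    (hf'0 : ∀ t ∈ Ico (0:ℝ) 1, 0 ≤ f' t)
    (hfmono : MonotoneOn f (Ico (0:ℝ) 1))
    (hf'mono : MonotoneOn f' (Ico (0:ℝ) 1))
    (hfc : ContinuousOn f (Ico (0:ℝ) 1))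
    (hf'c : ContinuousOn f' (Ico (0:ℝ) 1))
    (hFTC : ∀ a b : ℝ, a ∈ Ico (0:ℝ) 1 → b ∈ Ico (0:ℝ) 1 → a ≤ b →
      ∫ s in a..b, f' s = f b - f a)
    (hε : 0 < ε) (hε2 : 2*ε ≤ 1/4) (hεs : 2*ε < s₀) (hs₀t : s₀ < t₀) (ht₀1 : t₀ < 1)
    (hf2ε : f (2*ε) ≤ f 0 + 1) (hfs₀ : 5*(f 0 + 1) ≤ f s₀) (hf't₀ : 2 * f' s₀ ≤ f' t₀)
    {n : ℕ} {Ω : Set (Eu n)} {u : Eu n → ℝ}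
    (hΩopen : IsOpen Ω) (hΩbd : IsBounded Ω)
    (hucont : ContinuousOn u (closure Ω)) (huC2 : ContDiffOn ℝ 2 u Ω)
    (hrange : ∀ x ∈ Ω, 0 ≤ u x ∧ u x < 1)
    (heq : ∀ x ∈ Ω, -lap u x = f (u x))
    (hbd : ∀ x ∈ frontier Ω, u x = 0)
    (hstab : ∀ ξ : Eu n → ℝ, ContDiff ℝ (⊤:ℕ∞) ξ → HasCompactSupport ξ → tsupport ξ ⊆ Ω →
      0 ≤ ∫ x in Ω, (‖gradient ξ x‖ ^ 2 - f' (u x) * ξ x ^ 2)) :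
    ∫ x in Ω, f' (u x) * f (u x) ≤ 2 * (f' t₀ * f t₀) * (volume Ω).toReal := by
  classical
  -- memberships
  have hK0 : 0 ≤ f 0 := hf0 0 ⟨le_rfl, one_pos⟩
  have hmem0 : (0:ℝ) ∈ Ico (0:ℝ) 1 := ⟨le_rfl, one_pos⟩
  have hmemε : ε ∈ Ico (0:ℝ) 1 := ⟨hε.le, by linarith⟩
  have hmem2ε : 2*ε ∈ Ico (0:ℝ) 1 := ⟨by positivity, by linarith⟩
  have hmems₀ : s₀ ∈ Ico (0:ℝ) 1 := ⟨by linarith, by linarith⟩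
  have hmemt₀ : t₀ ∈ Ico (0:ℝ) 1 := ⟨by linarith, ht₀1⟩
  have hft₀0 : 0 ≤ f' t₀ * f t₀ := mul_nonneg (hf'0 _ hmemt₀) (hf0 _ hmemt₀)
  rcases Set.eq_empty_or_nonempty Ω with hemp | hne
  · rw [hemp]
    simp
  -- domain facts
  have hms : MeasurableSet Ω := hΩopen.measurableSet
  have hclos : IsCompact (closure Ω) := hΩbd.isCompact_closure
  have hvolfin : volume Ω < ⊤ := lt_of_le_of_lt (measure_mono subset_closure)
    hclos.measure_lt_top
  haveI : IsFiniteMeasure (volume.restrict Ω) :=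
    ⟨by rw [Measure.restrict_apply_univ]; exact hvolfin⟩
  obtain ⟨x₀, hx₀⟩ := hne
  have hclne : (closure Ω).Nonempty := ⟨x₀, subset_closure hx₀⟩
  obtain ⟨z, hzmem, hzmax⟩ := hclos.exists_isMaxOn hclne hucont
  have huz1 : u z < 1 := by
    by_cases hz : z ∈ Ω
    · exact (hrange z hz).2
    · have hzf : z ∈ frontier Ω := by
        rw [hΩopen.frontier_eq]; exact ⟨hzmem, hz⟩
      rw [hbd z hzf]; norm_num
  set T : ℝ := max (u z) t₀ with hTdef
  have hTmem : T ∈ Ico (0:ℝ) 1 := ⟨le_trans hmemt₀.1 (le_max_right _ _), max_lt huz1 ht₀1⟩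
  have huT : ∀ x ∈ Ω, u x ≤ T := fun x hx =>
    le_trans (hzmax (subset_closure hx)) (le_max_left _ _)
  have huI : ∀ x ∈ Ω, u x ∈ Ico (0:ℝ) 1 := fun x hx => ⟨(hrange x hx).1, (hrange x hx).2⟩
  have ht₀T : t₀ ≤ T := le_max_right _ _
  set T₂ : ℝ := (T+1)/2 with hT₂def
  have hTT₂ : T < T₂ := by rw [hT₂def]; linarith [hTmem.2]
  have hT₂1 : T₂ < 1 := by rw [hT₂def]; linarith [hTmem.2]
  -- the cutoff function
  set χ : ℝ → ℝ := fun t =>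
    Real.smoothTransition ((t-ε)/ε) * Real.smoothTransition ((T₂ - t)/(T₂ - T)) with hχdef
  have hχcont : Continuous χ := by
    apply Continuous.mul
    · exact Real.smoothTransition.continuous.comp (by continuity)
    · exact Real.smoothTransition.continuous.comp (by continuity)
  have hχnonneg : ∀ t, 0 ≤ χ t := fun t =>
    mul_nonneg (Real.smoothTransition.nonneg _) (Real.smoothTransition.nonneg _)
  have hχle1 : ∀ t, χ t ≤ 1 := fun t => by
    rw [hχdef]
    calc Real.smoothTransition ((t-ε)/ε) * Real.smoothTransition ((T₂ - t)/(T₂ - T))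
        ≤ 1 * 1 := mul_le_mul (Real.smoothTransition.le_one _) (Real.smoothTransition.le_one _)
          (Real.smoothTransition.nonneg _) zero_le_one
    _ = 1 := one_mul 1
  have hχ0 : ∀ t, t ≤ ε → χ t = 0 := by
    intro t ht
    have h1 : Real.smoothTransition ((t-ε)/ε) = 0 :=
      Real.smoothTransition.zero_of_nonpos
        (div_nonpos_iff.mpr (Or.inr ⟨by linarith, hε.le⟩))
    rw [hχdef]; dsimp only; rw [h1, zero_mul]
  have hχT₂ : ∀ t, T₂ ≤ t → χ t = 0 := by
    intro t ht
    have h1 : Real.smoothTransition ((T₂ - t)/(T₂ - T)) = 0 :=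
      Real.smoothTransition.zero_of_nonpos
        (div_nonpos_iff.mpr (Or.inr ⟨by linarith, by linarith⟩))
    rw [hχdef]; dsimp only; rw [h1, mul_zero]
  have hχ1 : ∀ t, 2*ε ≤ t → t ≤ T → χ t = 1 := by
    intro t h1 h2
    have e1 : Real.smoothTransition ((t-ε)/ε) = 1 :=
      Real.smoothTransition.one_of_one_le (by rw [le_div_iff₀ hε]; linarith)
    have e2 : Real.smoothTransition ((T₂ - t)/(T₂ - T)) = 1 :=
      Real.smoothTransition.one_of_one_le
        (by rw [le_div_iff₀ (by linarith : (0:ℝ) < T₂ - T)]; linarith)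
    rw [hχdef]; dsimp only; rw [e1, e2, one_mul]
  -- the truncated nonlinearity derivative
  set ζ' : ℝ → ℝ := fun t => f' t * χ t with hζ'def
  have hζ'0 : ∀ t, t ≤ ε → ζ' t = 0 := fun t ht => by
    rw [hζ'def]; dsimp only; rw [hχ0 t ht, mul_zero]
  have hζ'T₂ : ∀ t, T₂ ≤ t → ζ' t = 0 := fun t ht => by
    rw [hζ'def]; dsimp only; rw [hχT₂ t ht, mul_zero]
  have hζ'cont : Continuous ζ' := by
    rw [continuous_iff_continuousAt]
    intro t
    by_cases h1 : t < ε
    · apply ContinuousAt.congr continuousAt_const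
      exact Filter.eventuallyEq_of_mem (isOpen_Iio.mem_nhds h1)
        fun y hy => (hζ'0 y (le_of_lt hy)).symm
    by_cases h2 : T₂ < t
    · apply ContinuousAt.congr continuousAt_const
      exact Filter.eventuallyEq_of_mem (isOpen_Ioi.mem_nhds h2)
        fun y hy => (hζ'T₂ y (le_of_lt hy)).symm
    · have ht0 : 0 < t := lt_of_lt_of_le hε (not_lt.mp h1)
      have ht1 : t < 1 := lt_of_le_of_lt (not_lt.mp h2) hT₂1
      exact (hf'c.continuousAt (Ico_mem_nhds ht0 ht1)).mul hχcont.continuousAt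
  have hζ'nonneg : ∀ t ∈ Ico (0:ℝ) 1, 0 ≤ ζ' t := fun t ht =>
    mul_nonneg (hf'0 t ht) (hχnonneg t)
  have hζ'nn : ∀ t, 0 ≤ t → 0 ≤ ζ' t := by
    intro t ht
    by_cases h : T₂ ≤ t
    · rw [hζ'T₂ t h]
    · exact hζ'nonneg t ⟨ht, lt_trans (not_le.mp h) hT₂1⟩
  have hζ'lef' : ∀ t ∈ Ico (0:ℝ) 1, ζ' t ≤ f' t := fun t ht => by
    calc ζ' t = f' t * χ t := rfl
    _ ≤ f' t * 1 := mul_le_mul_of_nonneg_left (hχle1 t) (hf'0 t ht)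
    _ = f' t := mul_one _
  have hζ'eqf' : ∀ t, 2*ε ≤ t → t ≤ T → ζ' t = f' t := fun t h1 h2 => by
    rw [hζ'def]; dsimp only; rw [hχ1 t h1 h2, mul_one]
  -- its primitives
  set ζ : ℝ → ℝ := fun t => ∫ s in (0:ℝ)..t, ζ' s with hζdef
  set φφ : ℝ → ℝ := fun t => ∫ s in (0:ℝ)..t, (ζ' s)^2 with hφφdef
  have hζd : ∀ t, HasDerivAt ζ (ζ' t) t := fun t =>
    (hζ'cont.integral_hasStrictDerivAt 0 t).hasDerivAt
  have hφφd : ∀ t, HasDerivAt φφ ((ζ' t)^2) t := fun t =>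
    ((hζ'cont.pow 2).integral_hasStrictDerivAt 0 t).hasDerivAt
  have hζcont : Continuous ζ := by
    rw [continuous_iff_continuousAt]; exact fun t => (hζd t).continuousAt
  have hφφcont : Continuous φφ := by
    rw [continuous_iff_continuousAt]; exact fun t => (hφφd t).continuousAt
  have hζ'int : ∀ a b : ℝ, IntervalIntegrable ζ' volume a b := fun a b =>
    hζ'cont.intervalIntegrable a b
  have hζ'sqint : ∀ a b : ℝ, IntervalIntegrable (fun s => (ζ' s)^2) volume a b := fun a b =>
    (hζ'cont.pow 2).intervalIntegrable a b
  have hIccIco : ∀ a b : ℝ, a ∈ Ico (0:ℝ) 1 → b ∈ Ico (0:ℝ) 1 → Icc a b ⊆ Ico (0:ℝ) 1 := by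
    intro a b ha hb t ht
    exact ⟨ha.1.trans ht.1, lt_of_le_of_lt ht.2 hb.2⟩
  have hf'int : ∀ a b : ℝ, a ∈ Ico (0:ℝ) 1 → b ∈ Ico (0:ℝ) 1 → a ≤ b →
      IntervalIntegrable f' volume a b := by
    intro a b ha hb hab
    apply ContinuousOn.intervalIntegrable
    rw [uIcc_of_le hab]
    exact hf'c.mono (hIccIco a b ha hb)
  -- pointwise one-dimensional estimates
  have hζnonneg : ∀ t, 0 ≤ t → 0 ≤ ζ t := by
    intro t ht
    rw [hζdef]; dsimp only
    apply intervalIntegral.integral_nonneg ht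
    exact fun s hs => hζ'nn s hs.1
  have hζleft : ∀ t ∈ Ico (0:ℝ) 1, ζ t ≤ f t - f 0 := by
    intro t ht
    rw [← hFTC 0 t hmem0 ht ht.1, hζdef]; dsimp only
    apply intervalIntegral.integral_mono_on ht.1 (hζ'int 0 t) (hf'int 0 t hmem0 ht ht.1)
    intro s hs
    exact hζ'lef' s (hIccIco 0 t hmem0 ht hs)
  have hζeq0 : ∀ t, 0 ≤ t → t ≤ ε → ζ t = 0 := by
    intro t h0 h1
    rw [hζdef]; dsimp only
    have heqz : EqOn ζ' (fun _ => (0:ℝ)) (uIcc 0 t) := by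
      intro s hs
      rw [uIcc_of_le h0] at hs
      exact hζ'0 s (hs.2.trans h1)
    rw [intervalIntegral.integral_congr heqz, intervalIntegral.integral_zero]
  have hφφeq0 : ∀ t, 0 ≤ t → t ≤ ε → φφ t = 0 := by
    intro t h0 h1
    rw [hφφdef]; dsimp only
    have heqz : EqOn (fun s => (ζ' s)^2) (fun _ => (0:ℝ)) (uIcc 0 t) := by
      intro s hs
      rw [uIcc_of_le h0] at hs
      dsimp only; rw [hζ'0 s (hs.2.trans h1)]; ring
    rw [intervalIntegral.integral_congr heqz, intervalIntegral.integral_zero]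
  have hgap : ∀ t ∈ Ico (0:ℝ) 1, t ≤ T → f t - f 0 - ζ t ≤ 1 := by
    intro t ht htT
    by_cases hc : t ≤ 2*ε
    · have h1 : f t ≤ f (2*ε) := hfmono ht hmem2ε hc
      have h2 : 0 ≤ ζ t := hζnonneg t ht.1
      linarith
    · push_neg at hc
      have hint1 : IntervalIntegrable (fun s => f' s - ζ' s) volume 0 (2*ε) :=
        (hf'int 0 (2*ε) hmem0 hmem2ε (by positivity)).sub (hζ'int 0 (2*ε))
      have hint2 : IntervalIntegrable (fun s => f' s - ζ' s) volume (2*ε) t :=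
        (hf'int (2*ε) t hmem2ε ht hc.le).sub (hζ'int (2*ε) t)
      have hval : (∫ s in (0:ℝ)..t, (f' s - ζ' s)) = (f t - f 0) - ζ t := by
        rw [intervalIntegral.integral_sub (hf'int 0 t hmem0 ht ht.1) (hζ'int 0 t),
          hFTC 0 t hmem0 ht ht.1]
      have hsplit : (∫ s in (0:ℝ)..t, (f' s - ζ' s)) =
          (∫ s in (0:ℝ)..(2*ε), (f' s - ζ' s)) + ∫ s in (2*ε)..t, (f' s - ζ' s) :=
        (intervalIntegral.integral_add_adjacent_intervals hint1 hint2).symm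
      have hz2 : (∫ s in (2*ε)..t, (f' s - ζ' s)) = 0 := by
        have heqz : EqOn (fun s => f' s - ζ' s) (fun _ => (0:ℝ)) (uIcc (2*ε) t) := by
          intro s hs
          rw [uIcc_of_le hc.le] at hs
          dsimp only
          rw [hζ'eqf' s hs.1 (hs.2.trans htT)]; ring
        rw [intervalIntegral.integral_congr heqz, intervalIntegral.integral_zero]
      have hb1 : (∫ s in (0:ℝ)..(2*ε), (f' s - ζ' s)) ≤
          ∫ s in (0:ℝ)..(2*ε), f' s := by
        apply intervalIntegral.integral_mono_on (by positivity) hint1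
          (hf'int 0 (2*ε) hmem0 hmem2ε (by positivity))
        intro s hs
        have := hζ'nn s hs.1
        linarith
      rw [hFTC 0 (2*ε) hmem0 hmem2ε (by positivity)] at hb1
      linarith [hval, hsplit, hz2, hb1, hf2ε]
  have hφφle : ∀ t ∈ Ico (0:ℝ) 1, φφ t ≤ f' t * ζ t := by
    intro t ht
    have h1 : (∫ s in (0:ℝ)..t, (ζ' s)^2) ≤ ∫ s in (0:ℝ)..t, f' t * ζ' s := by
      apply intervalIntegral.integral_mono_on ht.1 (hζ'sqint 0 t)
        ((hζ'int 0 t).const_mul (f' t))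
      intro s hs
      have hsI := hIccIco 0 t hmem0 ht hs
      have h2 : ζ' s ≤ f' t := (hζ'lef' s hsI).trans (hf'mono hsI ht hs.2)
      have h3 : 0 ≤ ζ' s := hζ'nonneg s hsI
      calc (ζ' s)^2 = ζ' s * ζ' s := sq (ζ' s) ▸ rfl
      _ ≤ f' t * ζ' s := mul_le_mul_of_nonneg_right h2 h3
    rw [intervalIntegral.integral_const_mul] at h1
    rw [hφφdef, hζdef]
    exact h1
  have hkey : ∀ t ∈ Ico (0:ℝ) 1, t₀ ≤ t → t ≤ T →
      φφ t + 2*(f 0 + 1) * f' t ≤ f' t * ζ t := by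
    intro t ht ht₀ htT
    have hf'tnn : 0 ≤ f' t := hf'0 t ht
    have hA : f' t * ζ t - φφ t = ∫ s in (0:ℝ)..t, (f' t * ζ' s - (ζ' s)^2) := by
      rw [intervalIntegral.integral_sub ((hζ'int 0 t).const_mul (f' t)) (hζ'sqint 0 t),
        intervalIntegral.integral_const_mul]
    have hintA : ∀ a b : ℝ, IntervalIntegrable (fun s => f' t * ζ' s - (ζ' s)^2) volume a b :=
      fun a b => ((hζ'int a b).const_mul (f' t)).sub (hζ'sqint a b)
    have hpos : ∀ s, 0 ≤ s → s ≤ t → 0 ≤ f' t * ζ' s - (ζ' s)^2 := by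
      intro s h0 h1
      have hsI : s ∈ Ico (0:ℝ) 1 := ⟨h0, lt_of_le_of_lt h1 ht.2⟩
      have h2 : ζ' s ≤ f' t := (hζ'lef' s hsI).trans (hf'mono hsI ht h1)
      have h3 : 0 ≤ ζ' s := hζ'nonneg s hsI
      nlinarith
    have hsplit : (∫ s in (0:ℝ)..t, (f' t * ζ' s - (ζ' s)^2)) =
        (∫ s in (0:ℝ)..(2*ε), (f' t * ζ' s - (ζ' s)^2))
        + ((∫ s in (2*ε)..s₀, (f' t * ζ' s - (ζ' s)^2))
          + ∫ s in s₀..t, (f' t * ζ' s - (ζ' s)^2)) := by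
      rw [intervalIntegral.integral_add_adjacent_intervals (hintA (2*ε) s₀) (hintA s₀ t),
        intervalIntegral.integral_add_adjacent_intervals (hintA 0 (2*ε)) (hintA (2*ε) t)]
    have hp1 : 0 ≤ ∫ s in (0:ℝ)..(2*ε), (f' t * ζ' s - (ζ' s)^2) := by
      apply intervalIntegral.integral_nonneg (by positivity)
      intro s hs
      exact hpos s hs.1 (hs.2.trans (by linarith))
    have hp3 : 0 ≤ ∫ s in s₀..t, (f' t * ζ' s - (ζ' s)^2) := by
      apply intervalIntegral.integral_nonneg (by linarith)
      intro s hs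
      exact hpos s (by linarith [hs.1]) hs.2
    have hmid : (f s₀ - f (2*ε)) * (f' t / 2) ≤
        ∫ s in (2*ε)..s₀, (f' t * ζ' s - (ζ' s)^2) := by
      have hmono2 : (∫ s in (2*ε)..s₀, f' s * (f' t / 2)) ≤
          ∫ s in (2*ε)..s₀, (f' t * ζ' s - (ζ' s)^2) := by
        apply intervalIntegral.integral_mono_on hεs.le
          ((hf'int (2*ε) s₀ hmem2ε hmems₀ hεs.le).mul_const _) (hintA (2*ε) s₀)
        intro s hs
        have hsI : s ∈ Ico (0:ℝ) 1 := hIccIco (2*ε) s₀ hmem2ε hmems₀ hs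
        have hζs : ζ' s = f' s := hζ'eqf' s hs.1 (by linarith [hs.2])
        have hf's : f' s ≤ f' s₀ := hf'mono hsI hmems₀ hs.2
        have hf's₀ : f' s₀ ≤ f' t / 2 := by
          have : f' t₀ ≤ f' t := hf'mono hmemt₀ ht ht₀
          linarith
        have hf'snn : 0 ≤ f' s := hf'0 s hsI
        rw [hζs]
        nlinarith
      have hFTCmid : (∫ s in (2*ε)..s₀, f' s * (f' t / 2)) =
          (f s₀ - f (2*ε)) * (f' t / 2) := by
        rw [intervalIntegral.integral_mul_const, hFTC (2*ε) s₀ hmem2ε hmems₀ hεs.le]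
      linarith [hmono2, hFTCmid.symm.le]
    have hbig : 4*(f 0 + 1) ≤ f s₀ - f (2*ε) := by linarith
    have hfin : 2*(f 0 + 1) * f' t ≤ f' t * ζ t - φφ t := by
      rw [hA, hsplit]
      have h4 : 4*(f 0 + 1) * (f' t / 2) ≤ (f s₀ - f (2*ε)) * (f' t / 2) :=
        mul_le_mul_of_nonneg_right hbig (by positivity)
      nlinarith [hp1, hp3, hmid]
    linarith
  -- the compact set where u ≥ ε
  have hucontΩ : ContinuousOn u Ω := huC2.continuousOn
  set KS : Set (Eu n) := closure Ω ∩ u ⁻¹' (Ici ε) with hKSdef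
  have hKSclosed : IsClosed KS :=
    hucont.preimage_isClosed_of_isClosed isClosed_closure isClosed_Ici
  have hKScomp : IsCompact KS := hclos.of_isClosed_subset hKSclosed inter_subset_left
  have hKSΩ : KS ⊆ Ω := by
    rintro x ⟨hx1, hx2⟩
    by_contra hx
    have hxf : x ∈ frontier Ω := by rw [hΩopen.frontier_eq]; exact ⟨hx1, hx⟩
    have h0 := hbd x hxf
    have h1 : ε ≤ u x := hx2
    rw [h0] at h1
    linarith
  have hoffKS : ∀ x ∈ Ω, x ∉ KS → u x < ε := by
    intro x hx hxK
    by_contra h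
    exact hxK ⟨subset_closure hx, le_of_not_gt h⟩
  -- derivative data for u
  have hfu : ContDiffOn ℝ 1 (fderiv ℝ u) Ω := huC2.fderiv_of_isOpen hΩopen (by norm_num)
  have hfucont : ContinuousOn (fderiv ℝ u) Ω := hfu.continuousOn
  have hud : ∀ x ∈ Ω, DifferentiableAt ℝ u x := fun x hx =>
    (huC2.contDiffAt (hΩopen.mem_nhds hx)).differentiableAt (by norm_num)
  -- glue the test function w = ζ ∘ u
  have hFd : ∀ x ∈ Ω, HasFDerivAt (fun y => ζ (u y)) (ζ' (u x) • fderiv ℝ u x) x := by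
    intro x hx
    exact (hζd (u x)).comp_hasFDerivAt x (hud x hx).hasFDerivAt
  have hF'c : ContinuousOn (fun x => ζ' (u x) • fderiv ℝ u x) Ω :=
    (hζ'cont.comp_continuousOn hucontΩ).smul hfucont
  have h0F : ∀ x ∈ Ω, x ∉ KS → ζ (u x) = 0 := fun x hx hxK =>
    hζeq0 (u x) (hrange x hx).1 (hoffKS x hx hxK).le
  have h0F' : ∀ x ∈ Ω, x ∉ KS → ζ' (u x) • fderiv ℝ u x = 0 := fun x hx hxK => by
    rw [hζ'0 (u x) (hoffKS x hx hxK).le, zero_smul]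
  obtain ⟨hwC1, hwfeq, hwfeq0⟩ := glue_C1 hΩopen hKSclosed hKSΩ hFd hF'c h0F h0F'
  have hwz : ∀ x, x ∉ KS → Ω.indicator (fun y => ζ (u y)) x = 0 := glue_zero hKSΩ h0F
  have hwsupp : HasCompactSupport (Ω.indicator (fun y => ζ (u y))) :=
    HasCompactSupport.intro hKScomp hwz
  have hwts : tsupport (Ω.indicator (fun y => ζ (u y))) ⊆ Ω := by
    refine subset_trans ?_ hKSΩ
    apply closure_minimal ?_ hKSclosed
    intro x hx
    by_contra h
    exact hx (hwz x h)
  -- stability applied to w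
  have hcM : ∀ x ∈ Ω, |f' (u x)| ≤ f' T := fun x hx => by
    rw [abs_of_nonneg (hf'0 _ (huI x hx))]
    exact hf'mono (huI x hx) hTmem (huT x hx)
  have hcmeas : AEStronglyMeasurable (fun x => f' (u x)) (volume.restrict Ω) :=
    (hf'c.comp hucontΩ (fun x hx => huI x hx)).aestronglyMeasurable hms
  have hstabw := stability_extension hΩopen hcmeas hcM hstab hwC1 hwsupp hwts
  -- Nedev identity for (φφ, ζ')
  have h0φφ : ∀ x ∈ Ω, x ∉ KS → φφ (u x) = 0 := fun x hx hxK =>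
    hφφeq0 (u x) (hrange x hx).1 (hoffKS x hx hxK).le
  have h0ζ'u : ∀ x ∈ Ω, x ∉ KS → ζ' (u x) = 0 := fun x hx hxK =>
    hζ'0 (u x) (hoffKS x hx hxK).le
  obtain ⟨hiden, hintq, hintφ⟩ :=
    nedev_identity hΩopen huC2 hKScomp hKSΩ hζ'cont hφφd h0φφ h0ζ'u
  -- rewrite the stability integrand
  have hwptw : EqOn (fun x => ‖fderiv ℝ (Ω.indicator (fun y => ζ (u y))) x‖ ^ 2
      - f' (u x) * (Ω.indicator (fun y => ζ (u y)) x) ^ 2)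
      (fun x => (ζ' (u x))^2 * (∑ i, (fderiv ℝ u x (EuclideanSpace.single i 1))^2)
      - f' (u x) * (ζ (u x))^2) Ω := by
    intro x hx
    dsimp only
    rw [hwfeq x hx, indicator_of_mem hx, norm_smul, mul_pow, Real.norm_eq_abs, sq_abs,
      norm_fderiv_sq]
  -- integrability via boundedness
  have hbddInt : ∀ g : Eu n → ℝ, ContinuousOn g Ω → ∀ B : ℝ, (∀ x ∈ Ω, |g x| ≤ B) →
      IntegrableOn g Ω volume := by
    intro g hg B hB
    apply Integrable.mono' (integrable_const B) (hg.aestronglyMeasurable hms)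
    rw [ae_restrict_iff' hms]
    exact ae_of_all _ fun x hx => by rw [Real.norm_eq_abs]; exact hB x hx
  have hfTnn : 0 ≤ f' T := hf'0 T hTmem
  have hfT2nn : 0 ≤ f T := hf0 T hTmem
  have hfucomp : ContinuousOn (fun x => f (u x)) Ω := hfc.comp hucontΩ huI
  have hf'ucomp : ContinuousOn (fun x => f' (u x)) Ω := hf'c.comp hucontΩ huI
  have hζucomp : ContinuousOn (fun x => ζ (u x)) Ω := hζcont.comp_continuousOn hucontΩ
  have hφφucomp : ContinuousOn (fun x => φφ (u x)) Ω := hφφcont.comp_continuousOn hucontΩ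
  have hb_f : ∀ x ∈ Ω, f (u x) ≤ f T := fun x hx => hfmono (huI x hx) hTmem (huT x hx)
  have hb_f' : ∀ x ∈ Ω, f' (u x) ≤ f' T := fun x hx => (le_abs_self _).trans (hcM x hx)
  have hb_fnn : ∀ x ∈ Ω, 0 ≤ f (u x) := fun x hx => hf0 _ (huI x hx)
  have hb_f'nn : ∀ x ∈ Ω, 0 ≤ f' (u x) := fun x hx => hf'0 _ (huI x hx)
  have hb_ζnn : ∀ x ∈ Ω, 0 ≤ ζ (u x) := fun x hx => hζnonneg _ (hrange x hx).1
  have hb_ζ : ∀ x ∈ Ω, ζ (u x) ≤ f T := fun x hx => by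
    have h1 := hζleft (u x) (huI x hx)
    have h2 := hb_f x hx
    linarith
  have hintff : IntegrableOn (fun x => f' (u x) * f (u x)) Ω volume := by
    apply hbddInt _ (hf'ucomp.mul hfucomp) (f' T * f T)
    intro x hx
    simp only [Pi.mul_apply]
    rw [abs_of_nonneg (mul_nonneg (hb_f'nn x hx) (hb_fnn x hx))]
    exact mul_le_mul (hb_f' x hx) (hb_f x hx) (hb_fnn x hx) hfTnn
  have hintfζ2 : IntegrableOn (fun x => f' (u x) * (ζ (u x))^2) Ω volume := by
    apply hbddInt _ (hf'ucomp.mul (hζucomp.pow 2)) (f' T * (f T)^2)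
    intro x hx
    simp only [Pi.mul_apply, Pi.pow_apply]
    rw [abs_of_nonneg (mul_nonneg (hb_f'nn x hx) (sq_nonneg _))]
    apply mul_le_mul (hb_f' x hx) ?_ (sq_nonneg _) hfTnn
    exact pow_le_pow_left₀ (hb_ζnn x hx) (hb_ζ x hx) 2
  have hintφf : IntegrableOn (fun x => φφ (u x) * f (u x)) Ω volume := by
    apply hintφ.congr_fun ?_ hms
    intro x hx
    dsimp only
    rw [heq x hx]
  -- the main inequality
  have hstab2 : ∫ x in Ω, f' (u x) * (ζ (u x))^2 ≤
      ∫ x in Ω, (ζ' (u x))^2 * (∑ i, (fderiv ℝ u x (EuclideanSpace.single i 1))^2) := by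
    have h2 := hstabw
    rw [setIntegral_congr_fun hms hwptw] at h2
    rw [integral_sub hintq hintfζ2] at h2
    linarith
  have hMAIN : ∫ x in Ω, f' (u x) * (ζ (u x))^2 ≤ ∫ x in Ω, φφ (u x) * f (u x) := by
    refine hstab2.trans (le_of_eq ?_)
    rw [hiden]
    apply setIntegral_congr_fun hms
    intro x hx
    dsimp only
    rw [heq x hx]
  -- the superlevel set A = {u ≥ t₀}
  set A : Set (Eu n) := Ω ∩ (closure Ω ∩ u ⁻¹' (Ici t₀)) with hAdef
  have hAclosedpart : IsClosed (closure Ω ∩ u ⁻¹' (Ici t₀)) :=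
    hucont.preimage_isClosed_of_isClosed isClosed_closure isClosed_Ici
  have hAmeas : MeasurableSet A := hms.inter hAclosedpart.measurableSet
  have hAsub : A ⊆ Ω := inter_subset_left
  have hAiff : ∀ x, x ∈ A ↔ (x ∈ Ω ∧ t₀ ≤ u x) := fun x =>
    ⟨fun h => ⟨h.1, h.2.2⟩, fun h => ⟨h.1, subset_closure h.1, h.2⟩⟩
  -- the pointwise inequality
  have hPW : ∀ x ∈ Ω, φφ (u x) * f (u x)
      + 2*(f 0 + 1) * (A.indicator (fun y => f' (u y) * f (u y)) x)
      ≤ f' (u x) * (ζ (u x))^2 + (f 0 + 1) * (f' (u x) * f (u x)) := by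
    intro x hx
    have hmem := huI x hx
    have h0u := (hrange x hx).1
    have hTu := huT x hx
    have hζn : 0 ≤ ζ (u x) := hb_ζnn x hx
    have hζle : ζ (u x) ≤ f (u x) - f 0 := hζleft _ hmem
    have hgap2 : f (u x) - f 0 - ζ (u x) ≤ 1 := hgap _ hmem hTu
    have hf'n : 0 ≤ f' (u x) := hb_f'nn x hx
    have hfn : 0 ≤ f (u x) := hb_fnn x hx
    have hshared : f (u x) * (f' (u x) * ζ (u x)) ≤
        f' (u x) * (ζ (u x))^2 + (f 0 + 1) * (f' (u x) * f (u x)) := by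
      have h1 : 0 ≤ f' (u x) * ζ (u x) := mul_nonneg hf'n hζn
      have h2 : (f' (u x) * ζ (u x)) * (f (u x) - ζ (u x)) ≤
          (f' (u x) * ζ (u x)) * (f 0 + 1) :=
        mul_le_mul_of_nonneg_left (by linarith) h1
      have h3 : f' (u x) * ζ (u x) ≤ f' (u x) * f (u x) :=
        mul_le_mul_of_nonneg_left (by linarith) hf'n
      nlinarith [h2, h3]
    by_cases hxA : x ∈ A
    · have ht₀u : t₀ ≤ u x := ((hAiff x).mp hxA).2
      rw [indicator_of_mem hxA]
      have hk := hkey (u x) hmem ht₀u hTu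
      have hk2 : f (u x) * (φφ (u x) + 2*(f 0 + 1) * f' (u x)) ≤
          f (u x) * (f' (u x) * ζ (u x)) := mul_le_mul_of_nonneg_left hk hfn
      nlinarith [hshared, hk2]
    · rw [indicator_of_notMem hxA]
      have hφle := hφφle (u x) hmem
      have hk2 : f (u x) * φφ (u x) ≤ f (u x) * (f' (u x) * ζ (u x)) :=
        mul_le_mul_of_nonneg_left hφle hfn
      nlinarith [hshared, hk2]
  -- integrate the pointwise inequality
  have hindint : Integrable (A.indicator (fun y => f' (u y) * f (u y)))
      (volume.restrict Ω) := hintff.indicator hAmeas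
  have hLHSint : IntegrableOn (fun x => φφ (u x) * f (u x)
      + 2*(f 0 + 1) * (A.indicator (fun y => f' (u y) * f (u y)) x)) Ω volume :=
    hintφf.add (hindint.const_mul _)
  have hRHSint : IntegrableOn (fun x => f' (u x) * (ζ (u x))^2
      + (f 0 + 1) * (f' (u x) * f (u x))) Ω volume :=
    hintfζ2.add (hintff.const_mul _)
  have hIPW := setIntegral_mono_on hLHSint hRHSint hms hPW
  have hindval : (∫ x in Ω, A.indicator (fun y => f' (u y) * f (u y)) x) =
      ∫ x in A, f' (u x) * f (u x) := by
    rw [integral_indicator hAmeas, Measure.restrict_restrict hAmeas,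
      inter_eq_self_of_subset_left hAsub]
  have hsplitL : (∫ x in Ω, (φφ (u x) * f (u x)
      + 2*(f 0 + 1) * (A.indicator (fun y => f' (u y) * f (u y)) x))) =
      (∫ x in Ω, φφ (u x) * f (u x))
      + 2*(f 0 + 1) * ∫ x in A, f' (u x) * f (u x) := by
    rw [integral_add hintφf (hindint.const_mul _), integral_const_mul, hindval]
  have hsplitR : (∫ x in Ω, (f' (u x) * (ζ (u x))^2
      + (f 0 + 1) * (f' (u x) * f (u x)))) =
      (∫ x in Ω, f' (u x) * (ζ (u x))^2)
      + (f 0 + 1) * ∫ x in Ω, f' (u x) * f (u x) := by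
    rw [integral_add hintfζ2 (hintff.const_mul _), integral_const_mul]
  have hKpos : (0:ℝ) < f 0 + 1 := by linarith
  have h2XY : 2 * (∫ x in A, f' (u x) * f (u x)) ≤ ∫ x in Ω, f' (u x) * f (u x) := by
    rw [hsplitL, hsplitR] at hIPW
    nlinarith [hIPW, hMAIN, hKpos]
  -- decompose the integral over Ω
  have hdec := integral_add_compl hAmeas (hintff : Integrable _ (volume.restrict Ω))
  have hAcompl : Aᶜ ∩ Ω = Ω \ A := by rw [Set.inter_comm, Set.diff_eq]
  have hdec2 : (∫ x in A, f' (u x) * f (u x))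
      + (∫ x in Ω \ A, f' (u x) * f (u x)) = ∫ x in Ω, f' (u x) * f (u x) := by
    rw [← hdec, Measure.restrict_restrict hAmeas, inter_eq_self_of_subset_left hAsub,
      Measure.restrict_restrict hAmeas.compl, hAcompl]
  -- bound the integral over Ω \ A
  have hZbound : (∫ x in Ω \ A, f' (u x) * f (u x)) ≤
      f' t₀ * f t₀ * (volume Ω).toReal := by
    have hZmono : (∫ x in Ω \ A, f' (u x) * f (u x)) ≤
        ∫ _x in Ω \ A, (f' t₀ * f t₀ : ℝ) := by
      apply setIntegral_mono_on (hintff.mono_set diff_subset)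
        ((integrableOn_const_iff).mpr (Or.inr
          (lt_of_le_of_lt (measure_mono diff_subset) hvolfin)))
        (hms.diff hAmeas)
      intro x hx
      have hxΩ : x ∈ Ω := hx.1
      have hxA : ¬ t₀ ≤ u x := fun h => hx.2 ((hAiff x).mpr ⟨hxΩ, h⟩)
      have hle : u x ≤ t₀ := (not_le.mp hxA).le
      exact mul_le_mul (hf'mono (huI x hxΩ) hmemt₀ hle) (hfmono (huI x hxΩ) hmemt₀ hle)
        (hb_fnn x hxΩ) (hf'0 _ hmemt₀)
    have hconst : (∫ _x in Ω \ A, (f' t₀ * f t₀ : ℝ)) =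
        (volume (Ω \ A)).toReal * (f' t₀ * f t₀) := by
      rw [setIntegral_const, smul_eq_mul, measureReal_def]
    have hmeasle : (volume (Ω \ A)).toReal ≤ (volume Ω).toReal :=
      ENNReal.toReal_mono hvolfin.ne (measure_mono diff_subset)
    calc (∫ x in Ω \ A, f' (u x) * f (u x))
        ≤ (volume (Ω \ A)).toReal * (f' t₀ * f t₀) := by rw [← hconst]; exact hZmono
    _ ≤ (volume Ω).toReal * (f' t₀ * f t₀) := mul_le_mul_of_nonneg_right hmeasle hft₀0
    _ = f' t₀ * f t₀ * (volume Ω).toReal := by ring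
  linarith [h2XY, hdec2, hZbound]

/-- The Nedev/Ye–Zhou estimate: if `u` is a stable solution of the Dirichlet
problem `-Δu = f(u)` in a smooth bounded domain `Ω`, `u = 0` on `∂Ω`, with `f ≥ 0`, `f' ≥ 0`,
`f'' ≥ 0` and `f(1⁻) = +∞`, then `∫_Ω f'(u) f(u) ≤ C` with `C` depending only on `f` and the
Lebesgue measure of `Ω`. -/
theorem stmt11 (f f' f'' : ℝ → ℝ)
    (hC2 : C2On01 f f' f'')
    (hf0 : ∀ t ∈ Ico (0:ℝ) 1, 0 ≤ f t)
    (hf'0 : ∀ t ∈ Ico (0:ℝ) 1, 0 ≤ f' t)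
    (hf''0 : ∀ t ∈ Ico (0:ℝ) 1, 0 ≤ f'' t)
    (hblow : Tendsto f (𝓝[<] (1:ℝ)) atTop)
    (V : ENNReal) :
    ∃ C : ℝ,
      ∀ (n : ℕ) (Ω : Set (EuclideanSpace ℝ (Fin n))) (u : EuclideanSpace ℝ (Fin n) → ℝ),
        SmoothBoundedDomain Ω → volume Ω = V →
        ContinuousOn u (closure Ω) → ContDiffOn ℝ 2 u Ω →
        (∀ x ∈ Ω, 0 ≤ u x ∧ u x < 1) →
        (∀ x ∈ Ω, -lap u x = f (u x)) →
        (∀ x ∈ frontier Ω, u x = 0) →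
        StableSol f' u Ω →
        ∫ x in Ω, f' (u x) * f (u x) ≤ C := by
  obtain ⟨hf_d, hf'_d, hf''_c⟩ := hC2
  have hfc : ContinuousOn f (Ico (0:ℝ) 1) := fun t ht => (hf_d t ht).continuousWithinAt
  have hf'c : ContinuousOn f' (Ico (0:ℝ) 1) := fun t ht => (hf'_d t ht).continuousWithinAt
  have hK0 : 0 ≤ f 0 := hf0 0 ⟨le_rfl, one_pos⟩
  have hfd' : ∀ t ∈ Ioo (0:ℝ) 1, HasDerivAt f (f' t) t := fun t ht =>
    (hf_d t (Ioo_subset_Ico_self ht)).hasDerivAt (Ico_mem_nhds ht.1 ht.2)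
  have hf'd' : ∀ t ∈ Ioo (0:ℝ) 1, HasDerivAt f' (f'' t) t := fun t ht =>
    (hf'_d t (Ioo_subset_Ico_self ht)).hasDerivAt (Ico_mem_nhds ht.1 ht.2)
  have hfmono : MonotoneOn f (Ico (0:ℝ) 1) := by
    apply monotoneOn_of_deriv_nonneg (convex_Ico 0 1) hfc
    · rw [interior_Ico]
      exact fun t ht => (hfd' t ht).differentiableAt.differentiableWithinAt
    · rw [interior_Ico]
      intro t ht
      rw [(hfd' t ht).deriv]
      exact hf'0 t (Ioo_subset_Ico_self ht)
  have hf'mono : MonotoneOn f' (Ico (0:ℝ) 1) := by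
    apply monotoneOn_of_deriv_nonneg (convex_Ico 0 1) hf'c
    · rw [interior_Ico]
      exact fun t ht => (hf'd' t ht).differentiableAt.differentiableWithinAt
    · rw [interior_Ico]
      intro t ht
      rw [(hf'd' t ht).deriv]
      exact hf''0 t (Ioo_subset_Ico_self ht)
  have hsubIco : ∀ a b : ℝ, a ∈ Ico (0:ℝ) 1 → b ∈ Ico (0:ℝ) 1 → Icc a b ⊆ Ico (0:ℝ) 1 := by
    intro a b ha hb t ht
    exact ⟨ha.1.trans ht.1, lt_of_le_of_lt ht.2 hb.2⟩
  have hFTC : ∀ a b : ℝ, a ∈ Ico (0:ℝ) 1 → b ∈ Ico (0:ℝ) 1 → a ≤ b →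
      ∫ s in a..b, f' s = f b - f a := by
    intro a b ha hb hab
    apply intervalIntegral.integral_eq_sub_of_hasDeriv_right_of_le hab
    · exact hfc.mono (hsubIco a b ha hb)
    · intro t ht
      have htI : t ∈ Ioo (0:ℝ) 1 := ⟨lt_of_le_of_lt ha.1 ht.1, lt_trans ht.2 hb.2⟩
      exact (hfd' t htI).hasDerivWithinAt
    · apply ContinuousOn.intervalIntegrable
      rw [uIcc_of_le hab]
      exact hf'c.mono (hsubIco a b ha hb)
  have hf'big : ∀ t ∈ Ico (0:ℝ) 1, f t - f 0 ≤ f' t := by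
    intro t ht
    have hint : IntervalIntegrable f' volume 0 t := by
      apply ContinuousOn.intervalIntegrable
      rw [uIcc_of_le ht.1]
      exact hf'c.mono (hsubIco 0 t ⟨le_rfl, one_pos⟩ ht)
    have h1 : (∫ s in (0:ℝ)..t, f' s) ≤ ∫ _s in (0:ℝ)..t, f' t := by
      apply intervalIntegral.integral_mono_on ht.1 hint intervalIntegrable_const
      intro s hs
      exact hf'mono ⟨hs.1, lt_of_le_of_lt hs.2 ht.2⟩ ht hs.2
    rw [hFTC 0 t ⟨le_rfl, one_pos⟩ ht ht.1, intervalIntegral.integral_const,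
      smul_eq_mul, sub_zero] at h1
    have h2 : t * f' t ≤ f' t := by nlinarith [hf'0 t ht, ht.1, ht.2.le]
    linarith
  -- choice of ε
  have hcont0 : ContinuousWithinAt f (Ico (0:ℝ) 1) 0 := hfc 0 ⟨le_rfl, one_pos⟩
  have hev : f ⁻¹' (Iio (f 0 + 1)) ∈ 𝓝[Ico (0:ℝ) 1] 0 :=
    hcont0 (Iio_mem_nhds (lt_add_one (f 0)))
  rw [mem_nhdsWithin] at hev
  obtain ⟨U, hUopen, hU0, hUsub⟩ := hev
  obtain ⟨δ, hδpos, hδsub⟩ := Metric.isOpen_iff.mp hUopen 0 hU0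
  set ε := min (δ/4) (1/8) with hεdef
  have hε : 0 < ε := lt_min (by positivity) (by norm_num)
  have hε2 : 2*ε ≤ 1/4 := by
    have := min_le_right (δ/4) (1/8)
    rw [hεdef]; nlinarith
  have h2εδ : 2*ε < δ := by
    have := min_le_left (δ/4) (1/8)
    rw [hεdef]; nlinarith
  have hf2ε : f (2*ε) ≤ f 0 + 1 := by
    have hmem : 2*ε ∈ U ∩ Ico (0:ℝ) 1 := by
      constructor
      · apply hδsub
        rw [Metric.mem_ball, Real.dist_eq, sub_zero, abs_of_pos (by positivity)]
        exact h2εδ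
      · exact ⟨by positivity, by linarith⟩
    exact (hUsub hmem).le
  -- choice of s₀
  obtain ⟨s₀, hs₀f, hs₀mem⟩ : ∃ s₀, 5*(f 0 + 1) ≤ f s₀ ∧ s₀ ∈ Ioo (2*ε) 1 := by
    have h1 : ∀ᶠ t in 𝓝[<] (1:ℝ), 5*(f 0 + 1) ≤ f t :=
      hblow.eventually (eventually_ge_atTop _)
    have h2 : Ioo (2*ε) 1 ∈ 𝓝[<] (1:ℝ) :=
      Ioo_mem_nhdsLT_of_mem ⟨by linarith, le_rfl⟩
    exact (h1.and (eventually_of_mem h2 (fun t ht => ht))).exists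
  have hmems₀ : s₀ ∈ Ico (0:ℝ) 1 := ⟨by nlinarith [hs₀mem.1], hs₀mem.2⟩
  -- choice of t₀
  obtain ⟨t₀, ht₀f, ht₀mem⟩ : ∃ t₀, f 0 + 2*f' s₀ ≤ f t₀ ∧ t₀ ∈ Ioo s₀ 1 := by
    have h1 : ∀ᶠ t in 𝓝[<] (1:ℝ), f 0 + 2*f' s₀ ≤ f t :=
      hblow.eventually (eventually_ge_atTop _)
    have h2 : Ioo s₀ 1 ∈ 𝓝[<] (1:ℝ) :=
      Ioo_mem_nhdsLT_of_mem ⟨hs₀mem.2, le_rfl⟩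
    exact (h1.and (eventually_of_mem h2 (fun t ht => ht))).exists
  have hmemt₀ : t₀ ∈ Ico (0:ℝ) 1 := ⟨by nlinarith [ht₀mem.1, hmems₀.1], ht₀mem.2⟩
  have hf't₀ : 2 * f' s₀ ≤ f' t₀ := by
    have h1 := hf'big t₀ hmemt₀
    linarith
  refine ⟨2 * (f' t₀ * f t₀) * V.toReal, ?_⟩
  intro n Ω u hdom hvol hucont huC2 hrange heqn hbdry hstab
  obtain ⟨hΩopen, hΩbd, hΩconn, _⟩ := hdom
  have key := main_estimate f f' ε s₀ t₀ hf0 hf'0 hfmono hf'mono hfc hf'c hFTC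
    hε hε2 hs₀mem.1 ht₀mem.1 ht₀mem.2 hf2ε hs₀f hf't₀
    hΩopen hΩbd hucont huC2 hrange heqn hbdry hstab
  rw [hvol] at key
  exact key
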